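/- The exponential generating function for the number of m-packed words satisfies: if a_n(m) denotes the number of packed words of length mn whose evaluation is a multiple of m (each letter appears a positive multiple of m times, letters forming an initial segment), then ∑_{n≥0} a_n(m) t^n/(mn)! = (1 − ∑_{n≥1} t^n/(mn)!)^{-1}. -/

import Mathlib

/-- A word over `ℕ` is packed if its set of letters is an initial segment `{0,…,k-1}`. -/
def IsPacked (w : List ℕ) : Prop := ∀ k : ℕ, k + 1 ∈ w → k ∈ w

/-- The number of `m`-packed words of degree `n`: packed words of length `mn` in which
every occurring letter appears a number of times divisible by `m`. -/
noncomputable def mPackedCount (m n : ℕ) : ℕ :=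
  Nat.card {w : List ℕ //
    w.length = m * n ∧ IsPacked w ∧ ∀ a ∈ w, m ∣ w.count a}

namespace MPack

/-- reinsert zeros according to a boolean mask -/
def merge0 : List Bool → List ℕ → List ℕ
  | [], _ => []
  | true :: bs, l => 0 :: merge0 bs l
  | false :: bs, l => (l.headD 0 + 1) :: merge0 bs l.tail

/-- the nonzero letters, decremented -/
def strip0 (w : List ℕ) : List ℕ := (w.filter (fun a => a ≠ 0)).map (· - 1)

@[simp] lemma length_merge0 (bs : List Bool) (l : List ℕ) :
    (merge0 bs l).length = bs.length := by
  induction bs generalizing l with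
  | nil => rfl
  | cons b bs ih => cases b <;> simp [merge0, ih]

@[simp] lemma mask_merge0 (bs : List Bool) (l : List ℕ) :
    (merge0 bs l).map (fun a => decide (a = 0)) = bs := by
  induction bs generalizing l with
  | nil => rfl
  | cons b bs ih => cases b <;> simp [merge0, ih]

lemma strip0_merge0 : ∀ (bs : List Bool) (l : List ℕ), l.length = bs.count false →
    strip0 (merge0 bs l) = l := by
  intro bs
  induction bs with
  | nil => intro l h; simp [List.count] at h ⊢; simpa [List.length_eq_zero_iff] using h.symm ▸ rfl
  | cons b bs ih =>
    intro l h
    cases b with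
    | true =>
      simp [List.count_cons] at h
      simp [merge0, strip0] at ih ⊢
      exact ih l h
    | false =>
      simp [List.count_cons] at h
      match l with
      | [] => simp at h
      | x :: l' =>
        simp at h
        simp [merge0, strip0] at ih ⊢
        exact ih l' h

lemma merge0_strip0 (w : List ℕ) :
    merge0 (w.map (fun a => decide (a = 0))) (strip0 w) = w := by
  induction w with
  | nil => rfl
  | cons a w ih =>
    by_cases ha : a = 0
    · subst ha; simpa [merge0, strip0] using ih
    · simp [merge0, strip0, ha] at ih ⊢
      constructor
      · omega
      · exact ih

lemma count_strip0 (w : List ℕ) (b : ℕ) : (strip0 w).count b = w.count (b + 1) := by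
  induction w with
  | nil => rfl
  | cons a w ih =>
    by_cases ha : a = 0
    · subst ha; simp [strip0, List.count_cons] at ih ⊢; omega
    · simp [strip0, ha, List.count_cons] at ih ⊢
      have : (a - 1 = b) ↔ (a = b + 1) := by omega
      simp [ih, this]

lemma mem_strip0 (w : List ℕ) (b : ℕ) : b ∈ strip0 w ↔ b + 1 ∈ w := by
  rw [← List.count_pos_iff, ← List.count_pos_iff, count_strip0]

lemma length_strip0 (w : List ℕ) : (strip0 w).length = w.length - w.count 0 := by
  induction w with
  | nil => rfl
  | cons a w ih =>
    have : w.count 0 ≤ w.length := List.count_le_length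
    by_cases ha : a = 0
    · subst ha; simp [strip0, List.count_cons] at ih ⊢; omega
    · simp [strip0, ha, List.count_cons] at ih ⊢; omega

lemma isPacked_strip0 {w : List ℕ} (h : IsPacked w) : IsPacked (strip0 w) := by
  intro k hk
  rw [mem_strip0] at hk ⊢
  exact h (k + 1) hk

lemma isPacked_of_strip0 {w : List ℕ} (h0 : 0 ∈ w) (h : IsPacked (strip0 w)) :
    IsPacked w := by
  intro k hk
  cases k with
  | zero => exact h0
  | succ j =>
    have : j + 1 ∈ strip0 w := (mem_strip0 w _).2 hk
    exact (mem_strip0 w j).1 (h j this)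

lemma mem_of_le_of_packed {w : List ℕ} (h : IsPacked w) :
    ∀ {a : ℕ}, a ∈ w → ∀ b ≤ a, b ∈ w := by
  intro a
  induction a with
  | zero => intro ha b hb; interval_cases b; exact ha
  | succ c ih =>
    intro ha b hb
    rcases Nat.lt_or_ge b (c + 1) with hlt | hge
    · exact ih (h c ha) b (by omega)
    · have : b = c + 1 := by omega
      rwa [this]

lemma zero_mem_of_packed {w : List ℕ} (h : IsPacked w) {a : ℕ} (ha : a ∈ w) : 0 ∈ w :=
  mem_of_le_of_packed h ha 0 (Nat.zero_le a)

lemma lt_length_of_packed {w : List ℕ} (h : IsPacked w) {a : ℕ} (ha : a ∈ w) :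
    a < w.length := by
  have hsub : Finset.range (a + 1) ⊆ w.toFinset := by
    intro x hx
    rw [Finset.mem_range] at hx
    rw [List.mem_toFinset]
    exact mem_of_le_of_packed h ha x (by omega)
  have h1 := Finset.card_le_card hsub
  simp only [Finset.card_range] at h1
  have h2 := w.toFinset_card_le; omega

lemma count_zero_merge0 (bs : List Bool) (l : List ℕ) :
    (merge0 bs l).count 0 = bs.count true := by
  induction bs generalizing l with
  | nil => rfl
  | cons b bs ih => cases b <;> simp [merge0, List.count_cons, ih]

lemma count_true_mask (w : List ℕ) :
    (w.map (fun a => decide (a = 0))).count true = w.count 0 := by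
  induction w with
  | nil => rfl
  | cons a w ih =>
    by_cases ha : a = 0 <;> simp [ha, List.count_cons, ih]

/-- Finiteness of the set of packed words of fixed length with extra conditions. -/
lemma finite_packed_aux (L : ℕ) (P : List ℕ → Prop) :
    Finite {w : List ℕ // w.length = L ∧ IsPacked w ∧ P w} := by
  have hfin : ({w : List ℕ | w.length = L ∧ IsPacked w ∧ P w}).Finite := by
    have himg : {w : List ℕ | w.length = L ∧ IsPacked w ∧ P w} ⊆
        (fun l : List (Fin (L + 1)) => l.map Fin.val) '' {l | l.length = L} := by
      rintro w ⟨hl, hp, _⟩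
      refine ⟨w.attach.map (fun x => ⟨x.1, by
        have := lt_length_of_packed hp x.2; omega⟩), by simpa using hl, ?_⟩
      simp [List.map_map]
    exact ((List.finite_length_eq (Fin (L+1)) L).image _).subset himg
  exact hfin.to_subtype

lemma finite_mask (L c : ℕ) :
    Finite {bs : List Bool // bs.length = L ∧ bs.count true = c} :=
  Set.Finite.to_subtype <| (List.finite_length_eq Bool L).subset (fun _ h => h.1)

lemma card_mask : ∀ L c : ℕ,
    Nat.card {bs : List Bool // bs.length = L ∧ bs.count true = c} = L.choose c := by
  intro L
  induction L with
  | zero =>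
    intro c
    cases c with
    | zero =>
      rw [Nat.choose_zero_right]
      rw [Nat.card_eq_one_iff_unique]
      constructor
      · constructor
        intro ⟨a, ha⟩ ⟨b, hb⟩
        have : a = [] := List.length_eq_zero_iff.1 ha.1
        have : b = [] := List.length_eq_zero_iff.1 hb.1
        subst_vars; rfl
      · exact ⟨⟨[], by simp⟩⟩
    | succ c =>
      have : IsEmpty {bs : List Bool // bs.length = 0 ∧ bs.count true = c + 1} := by
        constructor
        rintro ⟨bs, h1, h2⟩
        have : bs = [] := List.length_eq_zero_iff.1 h1
        subst this; simp at h2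
      rw [Nat.card_of_isEmpty, Nat.choose_eq_zero_of_lt (by omega)]
  | succ L ih =>
    intro c
    haveI := finite_mask L c
    cases c with
    | zero =>
      have e : {bs : List Bool // bs.length = L ∧ bs.count true = 0} ≃
          {bs : List Bool // bs.length = L + 1 ∧ bs.count true = 0} := by
        apply Equiv.ofBijective (fun t => ⟨false :: t.1, by simp [t.2.1, List.count_cons, t.2.2]⟩)
        constructor
        · rintro ⟨t, ht⟩ ⟨t', ht'⟩ h
          simp only [Subtype.mk.injEq, List.cons.injEq] at h
          exact Subtype.ext h.2
        · rintro ⟨bs, h1, h2⟩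
          match bs with
          | [] => simp at h1
          | b :: t =>
            cases b with
            | true => simp [List.count_cons] at h2
            | false =>
              refine ⟨⟨t, by simpa using h1, by simpa [List.count_cons] using h2⟩, rfl⟩
      rw [← Nat.card_congr e, ih 0, Nat.choose_zero_right, Nat.choose_zero_right]
    | succ c =>
      haveI := finite_mask L (c + 1)
      haveI := finite_mask L c
      have e : ({bs : List Bool // bs.length = L ∧ bs.count true = c} ⊕
          {bs : List Bool // bs.length = L ∧ bs.count true = c + 1}) ≃
          {bs : List Bool // bs.length = L + 1 ∧ bs.count true = c + 1} := by
        apply Equiv.ofBijective (fun x => match x with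
          | Sum.inl t => ⟨true :: t.1, by simp [t.2.1, List.count_cons, t.2.2]⟩
          | Sum.inr t => ⟨false :: t.1, by simp [t.2.1, List.count_cons, t.2.2]⟩)
        constructor
        · rintro (⟨t, ht⟩ | ⟨t, ht⟩) (⟨t', ht'⟩ | ⟨t', ht'⟩) h <;>
            simp only [Subtype.mk.injEq, List.cons.injEq] at h
          · exact congrArg Sum.inl (Subtype.ext h.2)
          · exact absurd h.1 (by simp)
          · exact absurd h.1 (by simp)
          · exact congrArg Sum.inr (Subtype.ext h.2)
        · rintro ⟨bs, h1, h2⟩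
          match bs with
          | [] => simp at h1
          | b :: t =>
            cases b with
            | true =>
              exact ⟨Sum.inl ⟨t, by simpa using h1, by
                have := h2; simp [List.count_cons] at this; omega⟩, rfl⟩
            | false =>
              exact ⟨Sum.inr ⟨t, by simpa using h1, by simpa [List.count_cons] using h2⟩, rfl⟩
      rw [← Nat.card_congr e, Nat.card_sum, ih c, ih (c + 1), Nat.choose_succ_succ]


lemma count_false_add_count_true (bs : List Bool) :
    bs.count false + bs.count true = bs.length := by
  induction bs with
  | nil => rfl
  | cons b t ih => cases b <;> simp [List.count_cons] <;> omega

lemma nat_card_sigma {ι : Type*} [Fintype ι] (f : ι → Type*) [∀ i, Finite (f i)] :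
    Nat.card (Σ i, f i) = ∑ i, Nat.card (f i) := by
  haveI := fun i => Fintype.ofFinite (f i)
  simp [Nat.card_eq_fintype_card]

lemma merge_props (m n : ℕ) (hm : 1 ≤ m) (k : Fin n)
    (bs : List Bool) (hb : bs.length = m * n ∧ bs.count true = m * (k.1 + 1))
    (l : List ℕ)
    (hl : l.length = m * (n - (k.1 + 1)) ∧ IsPacked l ∧ ∀ a ∈ l, m ∣ l.count a) :
    (merge0 bs l).length = m * n ∧ IsPacked (merge0 bs l) ∧
      ∀ a ∈ merge0 bs l, m ∣ (merge0 bs l).count a := by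
  have hk1 : k.1 + 1 ≤ n := k.2
  have hsum : m * (n - (k.1 + 1)) + m * (k.1 + 1) = m * n := by
    rw [← Nat.mul_add, Nat.sub_add_cancel hk1]
  have hcft := count_false_add_count_true bs
  have hlen : l.length = bs.count false := by omega
  have hstrip : strip0 (merge0 bs l) = l := strip0_merge0 bs l hlen
  have hcount0 : (merge0 bs l).count 0 = m * (k.1 + 1) := by
    rw [count_zero_merge0, hb.2]
  have h0mem : 0 ∈ merge0 bs l := by
    rw [← List.count_pos_iff, hcount0]
    have : 1 * 1 ≤ m * (k.1 + 1) := Nat.mul_le_mul hm (by omega)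
    omega
  refine ⟨by rw [length_merge0, hb.1], ?_, ?_⟩
  · exact isPacked_of_strip0 h0mem (by rw [hstrip]; exact hl.2.1)
  · intro a ha
    cases a with
    | zero => rw [hcount0]; exact Dvd.intro _ rfl
    | succ b =>
      have hcb : (merge0 bs l).count (b + 1) = l.count b := by
        rw [← count_strip0, hstrip]
      rw [hcb]
      apply hl.2.2 b
      rw [← hstrip, mem_strip0]
      exact ha

lemma mPackedCount_rec (m n : ℕ) (hm : 1 ≤ m) (hn : 1 ≤ n) :
    mPackedCount m n =
      ∑ k : Fin n, Nat.choose (m * n) (m * (k.1 + 1)) * mPackedCount m (n - (k.1 + 1)) := by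
  classical
  haveI hfink : ∀ k : Fin n,
      Finite ({bs : List Bool // bs.length = m * n ∧ bs.count true = m * (k.1 + 1)} ×
      {w : List ℕ // w.length = m * (n - (k.1 + 1)) ∧ IsPacked w ∧ ∀ a ∈ w, m ∣ w.count a}) := by
    intro k
    haveI := finite_mask (m * n) (m * (k.1 + 1))
    haveI := finite_packed_aux (m * (n - (k.1 + 1))) (fun w => ∀ a ∈ w, m ∣ w.count a)
    infer_instance
  let g : (Σ k : Fin n,
      ({bs : List Bool // bs.length = m * n ∧ bs.count true = m * (k.1 + 1)} ×
       {w : List ℕ // w.length = m * (n - (k.1 + 1)) ∧ IsPacked w ∧ ∀ a ∈ w, m ∣ w.count a})) →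
      {w : List ℕ // w.length = m * n ∧ IsPacked w ∧ ∀ a ∈ w, m ∣ w.count a} :=
    fun x => ⟨merge0 x.2.1.1 x.2.2.1, merge_props m n hm x.1 x.2.1.1 x.2.1.2 x.2.2.1 x.2.2.2⟩
  have hg : Function.Bijective g := by
    constructor
    · rintro ⟨k, ⟨bs, hb⟩, ⟨l, hl⟩⟩ ⟨k', ⟨bs', hb'⟩, ⟨l', hl'⟩⟩ h
      have hw : merge0 bs l = merge0 bs' l' := congrArg Subtype.val h
      have hbs : bs = bs' := by
        rw [← mask_merge0 bs l, ← mask_merge0 bs' l', hw]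
      have hkk : k = k' := by
        apply Fin.ext
        have h1 : m * (k.1 + 1) = m * (k'.1 + 1) := by
          rw [← hb.2, ← hb'.2, hbs]
        have := Nat.eq_of_mul_eq_mul_left (by omega : 0 < m) h1
        omega
      subst hkk
      have hsum : m * (n - (k.1 + 1)) + m * (k.1 + 1) = m * n := by
        rw [← Nat.mul_add, Nat.sub_add_cancel k.2]
      have hcft := count_false_add_count_true bs
      have hll : l = l' := by
        have h1 := strip0_merge0 bs l (by omega)
        have h2 : l'.length = bs'.count false := by rw [← hbs]; omega
        have h3 := strip0_merge0 bs' l' h2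
        rw [← h1, ← h3, hw]
      subst hbs; subst hll
      rfl
    · rintro ⟨w, hL, hP, hD⟩
      have hwne : w ≠ [] := by
        intro h; subst h
        simp at hL
        rcases hL with h | h
        · omega
        · omega
      obtain ⟨a, ha⟩ := List.exists_mem_of_ne_nil w hwne
      have h0 : 0 ∈ w := zero_mem_of_packed hP ha
      have hc0pos : 0 < w.count 0 := List.count_pos_iff.2 h0
      obtain ⟨d, hd⟩ := hD 0 h0
      have hcle : w.count 0 ≤ w.length := List.count_le_length
      have hd1 : 1 ≤ d := by
        by_contra hcon
        have : d = 0 := by omega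
        subst this; simp at hd; omega
      have hdn : d ≤ n := by
        have : m * d ≤ m * n := by omega
        exact Nat.le_of_mul_le_mul_left this (by omega)
      have hkn : d - 1 < n := by omega
      refine ⟨⟨⟨d - 1, hkn⟩, ⟨w.map (fun a => decide (a = 0)), ?_, ?_⟩,
        ⟨strip0 w, ?_, isPacked_strip0 hP, ?_⟩⟩, ?_⟩
      · rw [List.length_map, hL]
      · rw [count_true_mask, hd]
        simp only [Fin.val_mk]
        congr 1
        omega
      · rw [length_strip0, hL, hd]
        have h5 : m * (n - d) + m * d = m * n := by
          rw [← Nat.mul_add, Nat.sub_add_cancel hdn]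
        simp only [Fin.val_mk]
        have h6 : d - 1 + 1 = d := by omega
        rw [h6]
        omega
      · intro b hb
        rw [count_strip0]
        exact hD (b + 1) ((mem_strip0 w b).1 hb)
      · apply Subtype.ext
        exact merge0_strip0 w
  have e := (Equiv.ofBijective g hg).symm
  rw [mPackedCount, Nat.card_congr e, nat_card_sigma]
  apply Finset.sum_congr rfl
  intro k _
  haveI := finite_mask (m * n) (m * (k.1 + 1))
  haveI := finite_packed_aux (m * (n - (k.1 + 1))) (fun w => ∀ a ∈ w, m ∣ w.count a)
  rw [Nat.card_prod, card_mask]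
  rfl

lemma mPackedCount_zero (m : ℕ) : mPackedCount m 0 = 1 := by
  rw [mPackedCount, Nat.card_eq_one_iff_unique]
  constructor
  · constructor
    intro ⟨a, ha⟩ ⟨b, hb⟩
    have ha' : a = [] := List.length_eq_zero_iff.1 (by simpa using ha.1)
    have hb' : b = [] := List.length_eq_zero_iff.1 (by simpa using hb.1)
    subst ha'; subst hb'; rfl
  · exact ⟨⟨[], by simp, fun k h => by simp at h, fun a h => by simp at h⟩⟩

lemma term_eq (m n j : ℕ) (hm : 1 ≤ m) (hj : j < n) :
    ((Nat.choose (m * n) (m * (j + 1)) : ℚ) * (mPackedCount m (n - (j + 1)) : ℚ)) /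
        (Nat.factorial (m * n) : ℚ) =
      (mPackedCount m (n - 1 - j) : ℚ) / (Nat.factorial (m * (n - 1 - j)) : ℚ) *
        (1 / (Nat.factorial (m * (j + 1)) : ℚ)) := by
  have hnj : n - 1 - j = n - (j + 1) := by omega
  rw [hnj]
  have hle : m * (j + 1) ≤ m * n := Nat.mul_le_mul_left m (by omega)
  have hsub : m * n - m * (j + 1) = m * (n - (j + 1)) := by
    have : m * (n - (j + 1)) + m * (j + 1) = m * n := by
      rw [← Nat.mul_add, Nat.sub_add_cancel (by omega : j + 1 ≤ n)]
    omega
  have key : Nat.choose (m * n) (m * (j + 1)) * Nat.factorial (m * (j + 1)) *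
      Nat.factorial (m * (n - (j + 1))) = Nat.factorial (m * n) := by
    rw [← hsub]
    exact Nat.choose_mul_factorial_mul_factorial hle
  have keyQ : (Nat.choose (m * n) (m * (j + 1)) : ℚ) * (Nat.factorial (m * (j + 1)) : ℚ) *
      (Nat.factorial (m * (n - (j + 1))) : ℚ) = (Nat.factorial (m * n) : ℚ) := by
    exact_mod_cast congrArg (fun x : ℕ => (x : ℚ)) key
  have h1 : (Nat.factorial (m * n) : ℚ) ≠ 0 := Nat.cast_ne_zero.2 (Nat.factorial_ne_zero _)
  have h2 : (Nat.factorial (m * (j + 1)) : ℚ) ≠ 0 := Nat.cast_ne_zero.2 (Nat.factorial_ne_zero _)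
  have h3 : (Nat.factorial (m * (n - (j + 1))) : ℚ) ≠ 0 :=
    Nat.cast_ne_zero.2 (Nat.factorial_ne_zero _)
  rw [div_mul_div_comm, mul_one, div_eq_div_iff h1 (mul_ne_zero h3 h2)]
  linear_combination (mPackedCount m (n - (j + 1)) : ℚ) * keyQ

end MPack

open PowerSeries in
/-- The exponential generating function of the numbers `a_n(m)` of
`m`-packed words of degree `n` satisfies
`∑_{n≥0} a_n(m) tⁿ/(mn)! = (1 − ∑_{n≥1} tⁿ/(mn)!)⁻¹`. -/
theorem mPackedWords_egf (m : ℕ) (hm : 1 ≤ m) :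
    (PowerSeries.mk fun n => (mPackedCount m n : ℚ) / (Nat.factorial (m * n) : ℚ)) *
      (1 - PowerSeries.mk fun n =>
        if n = 0 then 0 else (1 : ℚ) / (Nat.factorial (m * n) : ℚ)) = 1 := by
  apply PowerSeries.ext
  intro n
  rw [mul_sub, mul_one, map_sub, PowerSeries.coeff_mul]
  simp only [PowerSeries.coeff_mk]
  rcases Nat.eq_zero_or_pos n with hn | hn
  · subst hn
    simp [MPack.mPackedCount_zero]
  · have hcoeff1 : (PowerSeries.coeff (R := ℚ) n) 1 = 0 := by
      rw [PowerSeries.coeff_one, if_neg (by omega)]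
    rw [hcoeff1, Finset.Nat.sum_antidiagonal_eq_sum_range_succ_mk, Finset.sum_range_succ]
    simp only [Nat.sub_self, eq_self_iff_true, if_true, ite_true, mul_zero, add_zero]
    rw [← Finset.sum_range_reflect, sub_eq_zero, MPack.mPackedCount_rec m n hm hn,
      Nat.cast_sum, Finset.sum_div, Fin.sum_univ_eq_sum_range
        (fun k => ((Nat.choose (m * n) (m * (k + 1)) * mPackedCount m (n - (k + 1)) : ℕ) : ℚ) /
          (Nat.factorial (m * n) : ℚ)) n]
    apply Finset.sum_congr rfl
    intro j hj
    rw [Finset.mem_range] at hj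
    have hidx : n - (n - 1 - j) = j + 1 := by omega
    rw [hidx, if_neg (by omega)]
    push_cast
    exact MPack.term_eq m n j hm hj
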